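/- arXiv:2005.04483 — 6 statements merged into one kernel-verified Lean document; each statement's English description precedes it below -/
import Mathlib

section
/- Let R be a Noetherian commutative ring and let I, J, K be ideals of R. Then there exists an integer t ≥ 1 such that (J + I^n K) : I = (J : I) + I^{n-1} K for every n ≥ t. -/
/-- Let `R` be a Noetherian commutative ring and `I, J, K` ideals of `R`. Then there exists
`t ≥ 1` such that `(J + I^n K) : I = (J : I) + I^(n-1) K` for every `n ≥ t`. -/
theorem colon_add_pow_mul_eq
    {R : Type*} [CommRing R] [IsNoetherianRing R] (I J K : Ideal R) :
    ∃ t : ℕ, 1 ≤ t ∧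
      ∀ n : ℕ, t ≤ n →
        (J + I ^ n * K).colon I = J.colon I + I ^ (n - 1) * K := by
  classical
  obtain ⟨S, hS⟩ : I.FG := IsNoetherian.noetherian I
  set ι := {x : R // x ∈ S} with hι
  let a : ι → R := Subtype.val
  have ha : Ideal.span (Set.range a) = I := by
    rw [Subtype.range_coe]; exact hS
  -- the colon ideal can be tested on the generators
  have hcolon : ∀ (P : Ideal R) (x : R), x ∈ P.colon I ↔ ∀ i : ι, x * a i ∈ P := by
    intro P x
    rw [Submodule.mem_colon]
    constructor
    · intro h i
      simpa [smul_eq_mul] using h (a i) (ha ▸ Ideal.subset_span ⟨i, rfl⟩)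
    · intro h p hp
      rw [← ha] at hp
      induction hp using Submodule.span_induction with
      | mem y hy =>
        obtain ⟨i, rfl⟩ := hy
        simpa [smul_eq_mul] using h i
      | zero => simp
      | add y z _ _ hy hz =>
        rw [smul_add]
        exact P.add_mem hy hz
      | smul r y _ hy =>
        rw [smul_comm]
        exact P.smul_mem r hy
  -- the target module
  let π : R →ₗ[R] R ⧸ (J : Submodule R R) := (J : Submodule R R).mkQ
  let Kb : Submodule R (R ⧸ (J : Submodule R R)) := Submodule.map π K
  let φ : R →ₗ[R] (ι → R ⧸ (J : Submodule R R)) :=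
    LinearMap.pi fun i => π.comp (LinearMap.toSpanSingleton R R (a i))
  have hφ : ∀ (x : R) (i : ι), φ x i = π (x * a i) := by
    intro x i; simp [φ, LinearMap.toSpanSingleton, smul_eq_mul]
  let N₀ : Submodule R (ι → R ⧸ (J : Submodule R R)) := Submodule.pi Set.univ fun _ => Kb
  -- membership in the filtration through π
  have hKb : ∀ (z : R) (m : ℕ), π z ∈ (I ^ m • Kb) ↔ z ∈ J + I ^ m * K := by
    intro z m
    have h1 : I ^ m • Kb = Submodule.map π (I ^ m • (K : Submodule R R)) :=
      (Submodule.map_smul'' _ _ _).symm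
    rw [h1, ← Submodule.mem_comap, Submodule.comap_map_eq, Submodule.ker_mkQ]
    have : (I ^ m • (K : Submodule R R)) ⊔ (J : Submodule R R) = J + I ^ m * K := by
      rw [smul_eq_mul, sup_comm]; rfl
    rw [this]
  have hpi : ∀ (x : R) (m : ℕ), φ x ∈ I ^ m • N₀ ↔ ∀ i : ι, x * a i ∈ J + I ^ m * K := by
    intro x m
    constructor
    · intro h i
      have hle : I ^ m • N₀ ≤ Submodule.pi Set.univ fun _ => I ^ m • Kb := by
        refine Submodule.smul_le.2 fun r hr v hv => ?_
        refine Submodule.mem_pi.2 fun j _ => ?_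
        exact Submodule.smul_mem_smul hr (Submodule.mem_pi.1 hv j trivial)
      have h2 := Submodule.mem_pi.1 (hle h) i trivial
      rw [hφ x i] at h2
      exact (hKb _ m).1 h2
    · intro h
      have hsingle : ∀ (i : ι) (w : R ⧸ (J : Submodule R R)), w ∈ I ^ m • Kb →
          Pi.single i w ∈ I ^ m • N₀ := by
        intro i w hw
        have h1 : (Pi.single i w : ι → R ⧸ (J : Submodule R R)) =
            LinearMap.single R (fun _ : ι => R ⧸ (J : Submodule R R)) i w := rfl
        have h2 : LinearMap.single R (fun _ : ι => R ⧸ (J : Submodule R R)) i w ∈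
            Submodule.map (LinearMap.single R (fun _ : ι => R ⧸ (J : Submodule R R)) i)
              (I ^ m • Kb) := Submodule.mem_map_of_mem hw
        rw [Submodule.map_smul''] at h2
        rw [h1]
        have hmaple : Submodule.map (LinearMap.single R (fun _ : ι => R ⧸ (J : Submodule R R)) i)
            Kb ≤ N₀ := by
          refine Submodule.map_le_iff_le_comap.2 fun k hk => ?_
          refine Submodule.mem_comap.2 (Submodule.mem_pi.2 fun j _ => ?_)
          by_cases hji : j = i
          · subst hji; simpa using hk
          · simp [LinearMap.single_apply, Pi.single_eq_of_ne hji, Kb]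
        exact smul_mono_right _ hmaple h2
      have hsum : φ x = ∑ i : ι, Pi.single i (φ x i) := by
        ext j; simp
      rw [hsum]
      refine Submodule.sum_mem _ fun i _ => hsingle i _ ?_
      rw [hφ, hKb]
      exact h i
  -- Artin–Rees
  let C : Submodule R (ι → R ⧸ (J : Submodule R R)) := LinearMap.range φ
  obtain ⟨c, hc⟩ :=
    ((I.stableFiltration_stable N₀).inter_right (I.trivialFiltration C)).exists_pow_smul_eq_of_ge
  refine ⟨c + 1, Nat.le_add_left _ _, fun n hn => ?_⟩
  have hn1 : 1 ≤ n := le_trans (Nat.le_add_left _ _) hn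
  apply le_antisymm
  · -- hard direction
    intro x hx
    have hx' : ∀ i : ι, x * a i ∈ J + I ^ n * K := (hcolon _ x).1 hx
    have h1 : φ x ∈ I ^ n • N₀ ⊓ C := ⟨(hpi x n).2 hx', ⟨x, rfl⟩⟩
    have h2 := hc n (by omega)
    simp only [Ideal.Filtration.inf_N, Ideal.stableFiltration_N, Ideal.trivialFiltration_N,
      Pi.inf_apply] at h2
    rw [h2] at h1
    -- identify I ^ c • N₀ ⊓ C
    have hA : (J + I ^ c * K).colon I = Submodule.comap φ (I ^ c • N₀) := by
      ext z
      rw [Submodule.mem_comap, hpi, hcolon]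
    have h3 : I ^ c • N₀ ⊓ C = Submodule.map φ ((J + I ^ c * K).colon I) := by
      rw [hA, Submodule.map_comap_eq, inf_comm]
    rw [h3, ← Submodule.map_smul''] at h1
    obtain ⟨y, hy, hxy⟩ := h1
    have hker : x - y ∈ J.colon I := by
      have hφ0 : φ (x - y) = 0 := by rw [map_sub, hxy, sub_self]
      rw [hcolon]
      intro i
      have h0 : π ((x - y) * a i) = 0 := by rw [← hφ (x - y) i, hφ0]; rfl
      rw [Submodule.mkQ_apply, Submodule.Quotient.mk_eq_zero] at h0
      exact h0
    have hy' : y ∈ J.colon I + I ^ (n - 1) * K := by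
      have hsub : I ^ (n - c) • ((J + I ^ c * K).colon I : Submodule R R) ≤
          J + I ^ (n - 1) * K := by
        rw [smul_eq_mul]
        have hnc : n - c = (n - c - 1) + 1 := by omega
        rw [hnc, pow_succ, mul_assoc]
        have hIA : I * (J + I ^ c * K).colon I ≤ J + I ^ c * K := by
          rw [Ideal.mul_le]
          intro r hr s hs
          rw [mul_comm r s, ← smul_eq_mul]
          exact Submodule.mem_colon.1 hs r hr
        calc I ^ (n - c - 1) * (I * (J + I ^ c * K).colon I)
            ≤ I ^ (n - c - 1) * (J + I ^ c * K) := Ideal.mul_mono_right hIA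
          _ = I ^ (n - c - 1) * J + I ^ (n - c - 1) * (I ^ c * K) := by rw [mul_add]
          _ ≤ J + I ^ (n - 1) * K := by
              have hnc2 : n - c - 1 + c = n - 1 := by omega
              have he : I ^ (n - c - 1) * (I ^ c * K) = I ^ (n - 1) * K := by
                rw [← mul_assoc, ← pow_add, hnc2]
              rw [he]
              exact sup_le_sup (Ideal.mul_le.2 fun r _ s hs => J.mul_mem_left r hs) le_rfl
      have hJle : J ≤ J.colon I := fun j hj =>
        Submodule.mem_colon.2 fun p _ => by
          rw [smul_eq_mul]
          exact J.mul_mem_right p hj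
      have := hsub hy
      rcases Submodule.mem_sup.1 this with ⟨u, hu, v, hv, huv⟩
      rw [← huv]
      exact Submodule.add_mem _ (Submodule.mem_sup_left (hJle hu)) (Submodule.mem_sup_right hv)
    have : x = y + (x - y) := by ring
    rw [this]
    exact Submodule.add_mem _ hy' (Submodule.mem_sup_left hker)
  · -- easy direction
    refine sup_le ?_ ?_
    · intro z hz
      rw [hcolon] at hz ⊢
      intro i
      exact Submodule.mem_sup_left (hz i)
    · intro z hz
      rw [hcolon]
      intro i
      refine Submodule.mem_sup_right ?_
      have hnn : n = (n - 1) + 1 := by omega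
      have : z * a i ∈ (I ^ (n - 1) * K) * I :=
        Ideal.mul_mem_mul hz (ha ▸ Ideal.subset_span ⟨i, rfl⟩)
      have heq : (I ^ (n - 1) * K) * I = I ^ n * K := by
        rw [mul_right_comm, ← pow_succ, ← hnn]
      rwa [heq] at this
end

section
/- Let (R,m) be a Noetherian local ring and let J, K be ideals of R. Then J is weakly m-full (i.e. mJ : m = J) if and only if there exists an integer t such that J + K·m^n is weakly m-full (i.e. m(J + K·m^n) : m = J + K·m^n) for every n ≥ t. -/
open IsLocalRing

namespace WMFAux

open Submodule

variable {R : Type*} [CommRing R]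


lemma smul_top_quot (B L : Ideal R) :
    L • (⊤ : Submodule R (R ⧸ B)) = Submodule.map B.mkQ L := by
  have h1 := Submodule.map_smul'' L (⊤ : Submodule R R) B.mkQ
  rw [Submodule.map_top, Submodule.range_mkQ, Ideal.smul_eq_mul, Ideal.mul_top] at h1
  exact h1.symm

lemma mkQ_mem_map {B L : Ideal R} {x : R} (hx : x ∈ L ⊔ B) :
    B.mkQ x ∈ Submodule.map B.mkQ L := by
  obtain ⟨l, hl, b, hb, rfl⟩ := Submodule.mem_sup.mp hx
  have : B.mkQ (l + b) = B.mkQ l := by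
    rw [map_add, show B.mkQ b = 0 from (Submodule.Quotient.mk_eq_zero B).mpr hb, add_zero]
  rw [this]
  exact Submodule.mem_map_of_mem hl

lemma mem_of_mkQ_mem {B L : Ideal R} {x : R} (hx : B.mkQ x ∈ Submodule.map B.mkQ L) :
    x ∈ L ⊔ B := by
  have : x ∈ Submodule.comap B.mkQ (Submodule.map B.mkQ L) := hx
  rw [Submodule.comap_map_mkQ] at this
  rwa [sup_comm] at this

lemma pi_smul_le {ι : Type*} [Finite ι] {M : Type*} [AddCommGroup M] [Module R M]
    (I : Ideal R) (p : ι → Submodule R M) :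
    Submodule.pi Set.univ (fun i => I • p i) ≤ I • Submodule.pi Set.univ p := by
  classical
  rw [← Submodule.iSup_map_single (p := fun i => I • p i)]
  apply iSup_le
  intro i
  rw [Submodule.map_smul'']
  exact smul_mono_right I
    ((le_iSup (fun i => Submodule.map (LinearMap.single R (fun _ : ι => M) i) (p i)) i).trans
      (Submodule.iSup_map_single (p := p)).le)

lemma smul_pi_le {ι : Type*} {M : Type*} [AddCommGroup M] [Module R M]
    (I : Ideal R) (p : ι → Submodule R M) :
    I • Submodule.pi Set.univ p ≤ Submodule.pi Set.univ (fun i => I • p i) := by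
  apply Submodule.smul_le.mpr
  intro r hr v hv
  rw [Submodule.mem_pi]
  intro i _
  exact smul_mem_smul hr (Submodule.mem_pi.mp hv i trivial)

lemma wmf_forward {R : Type*} [CommRing R] [IsLocalRing R] [IsNoetherianRing R] (J K : Ideal R)
    (h : (maximalIdeal R * J).colon (maximalIdeal R) = J) :
    ∃ t : ℕ, ∀ n : ℕ, t ≤ n →
      (maximalIdeal R * (J + K * maximalIdeal R ^ n)).colon (maximalIdeal R) =
        J + K * maximalIdeal R ^ n := by
  classical
  obtain ⟨G, hG⟩ := IsNoetherian.noetherian (maximalIdeal R)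
  set A : Ideal R := maximalIdeal R * J with hAdef
  have hgm : ∀ g : G, (g : R) ∈ maximalIdeal R := fun g => hG ▸ Submodule.subset_span g.2
  -- span principle
  have key_span : ∀ (x : R) (T : Submodule R R), (∀ g : G, (g : R) * x ∈ T) →
      ∀ p ∈ maximalIdeal R, x * p ∈ T := by
    intro x T hgen
    have hle : maximalIdeal R ≤ T.comap (LinearMap.lsmul R R x) := by
      rw [← hG, Submodule.span_le]
      intro g hg
      simp only [SetLike.mem_coe, Submodule.mem_comap, LinearMap.lsmul_apply, smul_eq_mul]
      rw [mul_comm]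
      exact hgen ⟨g, hg⟩
    intro p hp
    simpa using hle hp
  set ψ : R →ₗ[R] (↥G → R ⧸ A) :=
    LinearMap.pi fun i => A.mkQ ∘ₗ LinearMap.lsmul R R (i : R) with hψdef
  have hψ : ∀ (x : R) (i : G), ψ x i = A.mkQ ((i : R) * x) := fun x i => rfl
  have hker : ∀ x : R, ψ x = 0 → x ∈ J := by
    intro x hx
    rw [← h, Submodule.mem_colon]
    intro p hp
    rw [smul_eq_mul]
    refine key_span x A ?_ p hp
    intro g
    have hg0 : ψ x g = 0 := by rw [hx]; rfl
    rw [hψ] at hg0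
    exact_mod_cast (Submodule.Quotient.mk_eq_zero A).mp hg0
  set W : Submodule R (↥G → R ⧸ A) :=
    Submodule.pi Set.univ fun _ => (K * maximalIdeal R) • ⊤ with hWdef
  obtain ⟨k, hk⟩ := ((Ideal.stableFiltration_stable (maximalIdeal R) W).inter_right
      (Ideal.trivialFiltration (maximalIdeal R) (LinearMap.range ψ))).exists_pow_smul_eq_of_ge
  have hk' : ∀ n, k ≤ n → (maximalIdeal R ^ n • W ⊓ LinearMap.range ψ)
      = maximalIdeal R ^ (n - k) • (maximalIdeal R ^ k • W ⊓ LinearMap.range ψ) :=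
    fun n hn => hk n hn
  -- smul-top rewriting
  have hsm : ∀ c : ℕ, maximalIdeal R ^ c • ((K * maximalIdeal R) • (⊤ : Submodule R (R ⧸ A)))
      = (K * maximalIdeal R ^ (c + 1)) • (⊤ : Submodule R (R ⧸ A)) := by
    intro c
    rw [← Submodule.smul_assoc, Ideal.smul_eq_mul]
    congr 1
    rw [pow_succ]
    ring
  refine ⟨k + 1, fun n hn => ?_⟩
  have hdist : maximalIdeal R * (J + K * maximalIdeal R ^ n)
      = A ⊔ K * maximalIdeal R ^ (n + 1) := by
    rw [hAdef, mul_add]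
    congr 1
    rw [pow_succ]
    ring
  apply le_antisymm
  · intro x hx
    have hx' : ∀ g : G, (g : R) * x ∈ K * maximalIdeal R ^ (n + 1) ⊔ A := by
      intro g
      have := Submodule.mem_colon.mp hx (g : R) (hgm g)
      rw [smul_eq_mul, hdist, sup_comm, mul_comm x (g : R)] at this
      exact this
    have hxW : ψ x ∈ maximalIdeal R ^ n • W := by
      apply pi_smul_le
      rw [Submodule.mem_pi]
      intro i _
      rw [hψ, hsm n]
      rw [smul_top_quot]
      exact mkQ_mem_map (hx' i)
    have hmem : ψ x ∈ maximalIdeal R ^ (n - k)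
        • (maximalIdeal R ^ k • W ⊓ LinearMap.range ψ) := by
      rw [← hk' n (by omega)]
      exact ⟨hxW, ⟨x, rfl⟩⟩
    have hrange : maximalIdeal R ^ k • W ⊓ LinearMap.range ψ
        = Submodule.map ψ (Submodule.comap ψ (maximalIdeal R ^ k • W)) := by
      rw [Submodule.map_comap_eq, inf_comm]
    rw [hrange, ← Submodule.map_smul''] at hmem
    obtain ⟨u, hu, hux⟩ := hmem
    have hMC : maximalIdeal R * Submodule.comap ψ (maximalIdeal R ^ k • W)
        ≤ K * maximalIdeal R ^ (k + 1) ⊔ A := by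
      rw [Ideal.mul_le]
      intro r hr z hz
      have hz' : ∀ g : G, (g : R) * z ∈ K * maximalIdeal R ^ (k + 1) ⊔ A := by
        intro g
        have h1 : ψ z g ∈ maximalIdeal R ^ k • ((K * maximalIdeal R) • ⊤) :=
          Submodule.mem_pi.mp (smul_pi_le _ _ hz) g trivial
        rw [hψ, hsm k, smul_top_quot] at h1
        exact mem_of_mkQ_mem h1
      have := key_span z _ hz' r hr
      rwa [mul_comm z r] at this
    have husub : maximalIdeal R ^ (n - k) • Submodule.comap ψ (maximalIdeal R ^ k • W)
        ≤ (J ⊔ K * maximalIdeal R ^ n : Ideal R) := by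
      rw [Ideal.smul_eq_mul,
        show maximalIdeal R ^ (n - k) = maximalIdeal R ^ (n - k - 1) * maximalIdeal R by
          rw [← pow_succ]; congr 1; omega,
        mul_assoc]
      refine le_trans (Ideal.mul_mono_right hMC) ?_
      rw [← Ideal.smul_eq_mul, Submodule.smul_sup, Ideal.smul_eq_mul, Ideal.smul_eq_mul]
      apply sup_le
      · have e2 : maximalIdeal R ^ (n - k - 1) * (K * maximalIdeal R ^ (k + 1))
            = K * maximalIdeal R ^ n := by
          rw [mul_left_comm, ← pow_add, show (n - k - 1) + (k + 1) = n by omega]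
        rw [e2]
        exact le_sup_right
      · refine le_trans (le_trans Ideal.mul_le_right ?_) le_sup_left
        rw [hAdef]
        exact Ideal.mul_le_right
    have hu' : u ∈ (J ⊔ K * maximalIdeal R ^ n : Ideal R) := husub hu
    have hxu : x - u ∈ J := hker _ (by rw [map_sub, hux, sub_self])
    have hx2 : x = (x - u) + u := by ring
    rw [show (J + K * maximalIdeal R ^ n : Ideal R) = J ⊔ K * maximalIdeal R ^ n from rfl]
    exact hx2 ▸ Submodule.add_mem _ (Submodule.mem_sup_left hxu) hu'
  · intro x hx
    rw [Submodule.mem_colon]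
    intro p hp
    rw [smul_eq_mul, mul_comm x p]
    exact Ideal.mul_mem_mul hp hx

lemma wmf_backward {R : Type*} [CommRing R] [IsLocalRing R] [IsNoetherianRing R] (J K : Ideal R)
    (t : ℕ)
    (ht : ∀ n : ℕ, t ≤ n →
      (maximalIdeal R * (J + K * maximalIdeal R ^ n)).colon (maximalIdeal R) =
        J + K * maximalIdeal R ^ n) :
    (maximalIdeal R * J).colon (maximalIdeal R) = J := by
  haveI : Module.Finite R (R ⧸ J) :=
    Module.Finite.of_surjective (Submodule.mkQ J) (Submodule.mkQ_surjective J)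
  apply le_antisymm
  · intro x hx
    have hxn : ∀ i : ℕ, x ∈ maximalIdeal R ^ i ⊔ J := by
      intro i
      have h1 : x ∈ (maximalIdeal R * (J + K * maximalIdeal R ^ (max i t))).colon
          (maximalIdeal R) := by
        rw [Submodule.mem_colon]
        intro p hp
        exact Ideal.mul_mono_right le_sup_left (Submodule.mem_colon.mp hx p hp)
      rw [ht (max i t) (le_max_right i t)] at h1
      have h2 : (J + K * maximalIdeal R ^ (max i t) : Ideal R) ≤ maximalIdeal R ^ i ⊔ J := by
        apply sup_le le_sup_right
        refine le_trans (le_trans Ideal.mul_le_right ?_) le_sup_left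
        exact Ideal.pow_le_pow_right (le_max_left i t)
      exact h2 h1
    have hq : ∀ i : ℕ, J.mkQ x ∈ (maximalIdeal R ^ i • ⊤ : Submodule R (R ⧸ J)) := by
      intro i
      rw [smul_top_quot]
      exact mkQ_mem_map (hxn i)
    have hbot : (⨅ i : ℕ, maximalIdeal R ^ i • ⊤ : Submodule R (R ⧸ J)) = ⊥ :=
      Ideal.iInf_pow_smul_eq_bot_of_isLocalRing (maximalIdeal R)
        (Ideal.IsMaximal.ne_top (maximalIdeal.isMaximal R))
    have : J.mkQ x ∈ (⊥ : Submodule R (R ⧸ J)) := hbot ▸ (Submodule.mem_iInf _).mpr hq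
    rw [Submodule.mem_bot] at this
    exact (Submodule.Quotient.mk_eq_zero J).mp this
  · intro x hx
    rw [Submodule.mem_colon]
    intro p hp
    rw [smul_eq_mul, mul_comm x p]
    exact Ideal.mul_mem_mul hp hx

end WMFAux

/-- Let `(R,m)` be a Noetherian local ring and `J, K` ideals. Then `J` is weakly `m`-full
(`mJ : m = J`) iff there is `t` such that `J + K m^n` is weakly `m`-full for every `n ≥ t`. -/
theorem weakly_mfull_iff_weakly_mfull_add_eventually
    {R : Type*} [CommRing R] [IsLocalRing R] [IsNoetherianRing R] (J K : Ideal R) :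
    (maximalIdeal R * J).colon (maximalIdeal R) = J ↔
      ∃ t : ℕ, ∀ n : ℕ, t ≤ n →
        (maximalIdeal R * (J + K * maximalIdeal R ^ n)).colon (maximalIdeal R) =
          J + K * maximalIdeal R ^ n :=
  ⟨fun h => WMFAux.wmf_forward J K h, fun ⟨t, ht⟩ => WMFAux.wmf_backward J K t ht⟩
end

section
/- Let (R,m) be a Noetherian local ring and let I, J be ideals of R such that Jm is not contained in Im. Then the ideal I + Jm is Burch, i.e. (I + Jm)m : m ≠ (I + Jm) : m. -/
open IsLocalRing

/-- Let `(R,m)` be a Noetherian local ring and `I, J` ideals with `Jm ⊄ Im`.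
Then `I + Jm` is Burch, i.e. `(I + Jm)m : m ≠ (I + Jm) : m`. -/
theorem burch_of_not_le
    {R : Type*} [CommRing R] [IsLocalRing R] [IsNoetherianRing R] (I J : Ideal R)
    (h : ¬ J * maximalIdeal R ≤ I * maximalIdeal R) :
    ((I + J * maximalIdeal R) * maximalIdeal R).colon (maximalIdeal R) ≠
      (I + J * maximalIdeal R).colon (maximalIdeal R) := by
  intro heq
  apply h
  set m := maximalIdeal R
  have hJcolon : J ≤ ((I + J * m) * m).colon m := by
    rw [heq]
    intro j hj
    rw [Submodule.mem_colon]
    intro p hp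
    exact le_sup_right (α := Ideal R) (Ideal.mul_mem_mul hj hp)
  have hJm : J * m ≤ (I + J * m) * m := by
    rw [Ideal.mul_le]
    intro j hj p hp
    exact Submodule.mem_colon.mp (hJcolon hj) p hp
  have key : J * m ≤ I * m ⊔ m • (J * m) := by
    refine hJm.trans ?_
    rw [add_mul, smul_eq_mul, mul_comm m (J * m)]
    exact le_refl _
  exact Submodule.le_of_le_smul_of_le_jacobson_bot
    (IsNoetherian.noetherian _)
    (by rw [IsLocalRing.jacobson_eq_maximalIdeal ⊥ bot_ne_top])
    key
end

section
/- Let (R,m) be a Noetherian local ring and let I, J be proper ideals of R such that the Krull dimension of R/I is positive and the Krull dimension of R/J is zero. Then the ideal I + Jm is Burch, i.e. (I + Jm)m : m ≠ (I + Jm) : m. -/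
open IsLocalRing

/-- If the Krull dimension of a preorder is positive, there exist two strictly
comparable elements. -/
theorem exists_lt_of_krullDim_pos' {α : Type*} [Preorder α] (h : 0 < Order.krullDim α) :
    ∃ a b : α, a < b := by
  by_contra hc
  push_neg at hc
  have hne : Nonempty α := by
    by_contra hne
    rw [not_nonempty_iff] at hne
    rw [Order.krullDim_eq_bot_iff.mpr hne] at h
    exact absurd h (by simp)
  have hzero : ∀ p : LTSeries α, p.length = 0 := by
    intro p
    by_contra hp
    have h01 : (⟨0, by omega⟩ : Fin (p.length + 1)) < ⟨1, by omega⟩ := by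
      simp [Fin.lt_def]
    exact hc _ _ (p.strictMono h01)
  have : Order.krullDim α ≤ 0 := by
    rw [Order.krullDim_eq_iSup_length]
    have : (⨆ p : LTSeries α, (p.length : ℕ∞)) = 0 := by
      simp [hzero]
    rw [this]
    exact le_refl _
  exact absurd h (by simpa using this)

/-- If there are two strictly comparable elements, Krull dimension is positive. -/
theorem krullDim_pos_of_lt' {α : Type*} [Preorder α] {a b : α} (h : a < b) :
    0 < Order.krullDim α := by
  have := Order.LTSeries.length_le_krullDim ((RelSeries.singleton _ a).snoc b h)
  have hlen : ((RelSeries.singleton {(a, b) : α × α | a < b} a).snoc b h).length = 1 := rfl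
  rw [hlen] at this
  exact lt_of_lt_of_le (by norm_num) this

/-- Let `(R,m)` be a Noetherian local ring and `I, J` proper ideals with `dim R/I > 0` and
`dim R/J = 0`. Then `I + Jm` is Burch, i.e. `(I + Jm)m : m ≠ (I + Jm) : m`. -/
theorem burch_of_dim_pos_dim_zero
    {R : Type*} [CommRing R] [IsLocalRing R] [IsNoetherianRing R] (I J : Ideal R)
    (hI : I ≠ ⊤) (hJ : J ≠ ⊤)
    (hdimI : 0 < ringKrullDim (R ⧸ I)) (hdimJ : ringKrullDim (R ⧸ J) = 0) :
    ((I + J * maximalIdeal R) * maximalIdeal R).colon (maximalIdeal R) ≠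
      (I + J * maximalIdeal R).colon (maximalIdeal R) := by
  intro heq
  set m : Ideal R := maximalIdeal R with hm
  -- Step 1: every prime containing `J` equals `m`, hence `m ≤ radical J`.
  have hJprime : ∀ p : Ideal R, p.IsPrime → J ≤ p → p = m := by
    intro p hp hJp
    by_contra hpm
    have hple : p ≤ m := le_maximalIdeal hp.ne_top
    have hplt : p < m := lt_of_le_of_ne hple hpm
    -- build two comparable primes in `R ⧸ J`
    have hsurj : Function.Surjective (Ideal.Quotient.mk J) := Ideal.Quotient.mk_surjective
    have hker : RingHom.ker (Ideal.Quotient.mk J) = J := Ideal.mk_ker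
    have hJm : J ≤ m := le_maximalIdeal hJ
    have hpP : (p.map (Ideal.Quotient.mk J)).IsPrime :=
      Ideal.map_isPrime_of_surjective hsurj (hker.le.trans hJp)
    have hmP : (m.map (Ideal.Quotient.mk J)).IsPrime :=
      Ideal.map_isPrime_of_surjective hsurj (hker.le.trans hJm)
    have hmaplt : p.map (Ideal.Quotient.mk J) < m.map (Ideal.Quotient.mk J) := by
      refine lt_of_le_of_ne (Ideal.map_mono hple) ?_
      intro hmapeq
      have h1 : (p.map (Ideal.Quotient.mk J)).comap (Ideal.Quotient.mk J) = p := by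
        rw [Ideal.comap_map_of_surjective _ hsurj, ← RingHom.ker_eq_comap_bot, hker,
          sup_eq_left.mpr hJp]
      have h2 : (m.map (Ideal.Quotient.mk J)).comap (Ideal.Quotient.mk J) = m := by
        rw [Ideal.comap_map_of_surjective _ hsurj, ← RingHom.ker_eq_comap_bot, hker,
          sup_eq_left.mpr hJm]
      rw [hmapeq, h2] at h1
      exact hpm h1.symm
    have : (⟨_, hpP⟩ : PrimeSpectrum (R ⧸ J)) < ⟨_, hmP⟩ :=
      (PrimeSpectrum.asIdeal_lt_asIdeal _ _).mp hmaplt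
    have := krullDim_pos_of_lt' this
    rw [show Order.krullDim (PrimeSpectrum (R ⧸ J)) = ringKrullDim (R ⧸ J) from rfl,
      hdimJ] at this
    exact lt_irrefl 0 this
  have hmrad : m ≤ J.radical := by
    rw [Ideal.radical_eq_sInf]
    exact le_sInf fun p ⟨hJp, hp⟩ => (hJprime p hp hJp).symm.le
  obtain ⟨n, hn⟩ : ∃ n, m ^ n ≤ J :=
    Ideal.exists_pow_le_of_le_radical_of_fg hmrad (IsNoetherian.noetherian _)
  -- Step 2: there is a prime `p₀ ⊇ I` with `p₀ < m`.
  obtain ⟨a, b, hab⟩ := exists_lt_of_krullDim_pos' hdimI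
  set p₀ : Ideal R := a.asIdeal.comap (Ideal.Quotient.mk I) with hp₀def
  set p₁ : Ideal R := b.asIdeal.comap (Ideal.Quotient.mk I) with hp₁def
  have hp₀ : p₀.IsPrime := Ideal.IsPrime.comap _
  have hIp₀ : I ≤ p₀ := by
    intro x hx
    simp only [hp₀def, Ideal.mem_comap, Ideal.Quotient.eq_zero_iff_mem.mpr hx]
    exact (a.asIdeal).zero_mem
  have hp₀lt : p₀ < p₁ := by
    refine lt_of_le_of_ne (Ideal.comap_mono ((PrimeSpectrum.asIdeal_le_asIdeal _ _).mpr hab.le)) ?_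
    intro hcontra
    exact hab.ne (PrimeSpectrum.ext
      (Ideal.comap_injective_of_surjective _ Ideal.Quotient.mk_surjective hcontra))
  have hp₀m : p₀ < m :=
    lt_of_lt_of_le hp₀lt (le_maximalIdeal (Ideal.IsPrime.comap _ (hK := b.isPrime)).ne_top)
  -- Step 3: from the equality hypothesis, `J * m ≤ I` by Nakayama.
  set K : Ideal R := I + J * m with hK
  have hJcolon : J ≤ K.colon m := by
    intro x hx
    rw [Submodule.mem_colon]
    intro y hy
    have : x * y ∈ J * m := Ideal.mul_mem_mul hx hy
    exact (le_sup_right : J * m ≤ K) (by simpa [smul_eq_mul] using this)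
  rw [← heq] at hJcolon
  have hJmKm : J * m ≤ K * m := by
    rw [Ideal.mul_le]
    intro r hr s hs
    have := hJcolon hr
    rw [Submodule.mem_colon] at this
    simpa [smul_eq_mul] using this s hs
  have hJmle : J * m ≤ I ⊔ m • (J * m) := by
    refine le_trans hJmKm ?_
    have : K * m = I * m + J * m * m := by
      rw [hK, add_mul]
    rw [this]
    refine sup_le (le_trans Ideal.mul_le_left le_sup_left) ?_
    have : J * m * m = m • (J * m) := by
      rw [smul_eq_mul, mul_comm]
    rw [this]
    exact le_sup_right
  have hjac : m ≤ Ideal.jacobson ⊥ := by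
    rw [IsLocalRing.jacobson_eq_maximalIdeal ⊥ bot_ne_top]
  have hNak : J * m ≤ I :=
    Submodule.le_of_le_smul_of_le_jacobson_bot (IsNoetherian.noetherian _) hjac hJmle
  -- Step 4: contradiction.
  have hpow : m ^ (n + 1) ≤ I := by
    rw [pow_succ]
    exact le_trans (Ideal.mul_mono_left hn) hNak
  have hmp₀ : m ≤ p₀ := hp₀.le_of_pow_le (le_trans hpow hIp₀)
  exact lt_irrefl m (lt_of_le_of_lt hmp₀ hp₀m)
end

section
/- Let (R,m) be a Noetherian local domain, let f ∈ R be a nonzero element, let J be an ideal of R, and let x ∈ m be an element whose image in R/fR is a nonzerodivisor. Then m(fJ) : x = fJ if and only if mJ : x = J. -/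
open IsLocalRing

lemma span_singleton_mul_cancel {R : Type*} [CommRing R] [IsDomain R]
    {f : R} (hf : f ≠ 0) {A B : Ideal R}
    (h : Ideal.span {f} * A = Ideal.span {f} * B) : A = B := by
  ext a
  constructor <;> intro ha
  · have : f * a ∈ Ideal.span {f} * B := by
      rw [← h]; exact Ideal.mul_mem_mul (Ideal.mem_span_singleton_self f) ha
    obtain ⟨z, hz, hfz⟩ := Ideal.mem_span_singleton_mul.mp this
    rwa [← mul_left_cancel₀ hf hfz]
  · have : f * a ∈ Ideal.span {f} * A := by
      rw [h]; exact Ideal.mul_mem_mul (Ideal.mem_span_singleton_self f) ha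
    obtain ⟨z, hz, hfz⟩ := Ideal.mem_span_singleton_mul.mp this
    rwa [← mul_left_cancel₀ hf hfz]

/-- Let `(R,m)` be a Noetherian local domain, `f ≠ 0`, `J` an ideal, and `x ∈ m` whose image
in `R/fR` is a nonzerodivisor. Then `m(fJ) : x = fJ` iff `mJ : x = J`. -/
theorem mfull_mul_principal_iff
    {R : Type*} [CommRing R] [IsDomain R] [IsLocalRing R] [IsNoetherianRing R]
    (f : R) (hf : f ≠ 0) (J : Ideal R) (x : R) (hx : x ∈ maximalIdeal R)
    (hreg : ∀ r : R, x * r ∈ Ideal.span {f} → r ∈ Ideal.span {f}) :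
    (maximalIdeal R * (Ideal.span {f} * J)).colon (Ideal.span {x}) = Ideal.span {f} * J ↔
      (maximalIdeal R * J).colon (Ideal.span {x}) = J := by
  have key : (maximalIdeal R * (Ideal.span {f} * J)).colon (Ideal.span {x})
      = Ideal.span {f} * ((maximalIdeal R * J).colon (Ideal.span {x})) := by
    have hcomm : maximalIdeal R * (Ideal.span {f} * J)
        = Ideal.span {f} * (maximalIdeal R * J) := by ring
    ext r
    rw [Ideal.mem_colon_span_singleton, hcomm]
    simp only [Ideal.mem_span_singleton_mul]
    constructor
    · intro hrx
      -- r * x ∈ f * (mJ), so x * r ∈ span f, so r = f * s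
      obtain ⟨t, ht, hft⟩ := hrx
      have hr : r ∈ Ideal.span {f} := by
        apply hreg
        rw [mul_comm]
        exact Ideal.mem_span_singleton.mpr ⟨t, by rw [← hft]⟩
      obtain ⟨s, hs⟩ := Ideal.mem_span_singleton'.mp hr
      refine ⟨s, ?_, by rw [← hs]; ring⟩
      rw [Ideal.mem_colon_span_singleton]
      have : f * (s * x) = f * t := by rw [hft, ← hs]; ring
      rwa [mul_left_cancel₀ hf this]
    · rintro ⟨s, hs, rfl⟩
      rw [Ideal.mem_colon_span_singleton] at hs
      exact ⟨s * x, hs, by ring⟩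
  rw [key]
  constructor
  · intro h; exact span_singleton_mul_cancel hf h
  · intro h; rw [h]
end

section
/- Let (R,m) be a two-dimensional regular local ring and let I, J be nonzero proper ideals with ord(I∩J) = max{ord(I), ord(J)}. Let x ∈ m be a nonzero element such that length(R/(I+xR)) = ord(I), length(R/(J+xR)) = ord(J), length(R/((I∩J)+xR)) = ord(I∩J), length(R/((I+J)+xR)) = ord(I+J), and such that I : x = I : m and J : x = J : m. Then (I+J) : x = (I+J) : m, i.e. I + J is full with respect to x. -/
open IsLocalRing

/-- The length of an `R`-module `M`, as the Krull dimension of its lattice of submodules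
(the supremum of lengths of chains of submodules). -/
noncomputable def moduleLength (R M : Type*) [CommRing R] [AddCommGroup M] [Module R M] :
    WithBot ℕ∞ :=
  Order.krullDim (Submodule R M)

open Order

section AuxLength

variable {R M N : Type*} [CommRing R] [AddCommGroup M] [Module R M]
  [AddCommGroup N] [Module R N]

/-- Two monotone chains where at each step at least one is strict. -/
lemma nat_chain_bound {α β : Type*} [Preorder α] [Preorder β]
    (a : ℕ → α) (b : ℕ → β) (n : ℕ)
    (ha : ∀ i < n, a i ≤ a (i+1)) (hb : ∀ i < n, b i ≤ b (i+1))
    (h : ∀ i < n, a i < a (i+1) ∨ b i < b (i+1)) :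
    (n : ℕ∞) ≤ Order.height (a n) + Order.height (b n) := by
  induction n with
  | zero => simp
  | succ n ih =>
    have IH : (n : ℕ∞) ≤ Order.height (a n) + Order.height (b n) :=
      ih (fun i hi => ha i (by omega)) (fun i hi => hb i (by omega))
        (fun i hi => h i (by omega))
    by_cases hta : Order.height (a n) = ⊤
    · have h1 : Order.height (a (n+1)) = ⊤ :=
        top_le_iff.mp (hta ▸ Order.height_mono (ha n (by omega)))
      simp [h1]
    by_cases htb : Order.height (b n) = ⊤
    · have h1 : Order.height (b (n+1)) = ⊤ :=
        top_le_iff.mp (htb ▸ Order.height_mono (hb n (by omega)))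
      simp [h1]
    have hstep : Order.height (a n) + Order.height (b n) + 1 ≤
        Order.height (a (n+1)) + Order.height (b (n+1)) := by
      rcases h n (by omega) with hlt | hlt
      · have h1 : Order.height (a n) + 1 ≤ Order.height (a (n+1)) := by
          rw [ENat.add_one_le_iff hta]
          exact Order.height_strictMono hlt (lt_top_iff_ne_top.mpr hta)
        calc Order.height (a n) + Order.height (b n) + 1
            = (Order.height (a n) + 1) + Order.height (b n) := by ring
          _ ≤ Order.height (a (n+1)) + Order.height (b (n+1)) :=
            add_le_add h1 (Order.height_mono (hb n (by omega)))
      · have h1 : Order.height (b n) + 1 ≤ Order.height (b (n+1)) := by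
          rw [ENat.add_one_le_iff htb]
          exact Order.height_strictMono hlt (lt_top_iff_ne_top.mpr htb)
        calc Order.height (a n) + Order.height (b n) + 1
            = Order.height (a n) + (Order.height (b n) + 1) := by ring
          _ ≤ Order.height (a (n+1)) + Order.height (b (n+1)) :=
            add_le_add (Order.height_mono (ha n (by omega))) h1
    calc ((n+1 : ℕ) : ℕ∞) = (n : ℕ∞) + 1 := by push_cast; ring
      _ ≤ Order.height (a n) + Order.height (b n) + 1 := by exact add_le_add IH le_rfl
      _ ≤ _ := hstep

variable {R M N : Type*} [CommRing R] [AddCommGroup M] [Module R M]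
  [AddCommGroup N] [Module R N]

/-- Length of `M` is at most length of kernel plus length of target. -/
lemma moduleLength_le_ker_add (f : M →ₗ[R] N) :
    moduleLength R M ≤ moduleLength R (LinearMap.ker f) + moduleLength R N := by
  rw [moduleLength, Order.krullDim]
  refine iSup_le fun p => ?_
  set k := LinearMap.ker f
  -- two auxiliary chains
  set a : ℕ → Submodule R k := fun i => Submodule.comap k.subtype (p ⟨min i p.length, by omega⟩)
  set b : ℕ → Submodule R N := fun i => Submodule.map f (p ⟨min i p.length, by omega⟩)
  have pm : ∀ i < p.length, p ⟨min i p.length, by omega⟩ < p ⟨min (i+1) p.length, by omega⟩ := by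
    intro i hi
    apply p.strictMono
    simp only [Fin.mk_lt_mk]
    omega
  have ha : ∀ i < p.length, a i ≤ a (i+1) := fun i hi =>
    Submodule.comap_mono (pm i hi).le
  have hb : ∀ i < p.length, b i ≤ b (i+1) := fun i hi =>
    Submodule.map_mono (pm i hi).le
  have hd : ∀ i < p.length, a i < a (i+1) ∨ b i < b (i+1) := by
    intro i hi
    by_contra hcon
    push_neg at hcon
    obtain ⟨ha', hb'⟩ := hcon
    have hae : a i = a (i+1) := ((ha i hi).lt_or_eq.resolve_left ha')
    have hbe : b i = b (i+1) := ((hb i hi).lt_or_eq.resolve_left hb')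
    -- derive p i = p (i+1)
    set s := p ⟨min i p.length, by omega⟩
    set t := p ⟨min (i+1) p.length, by omega⟩
    have hst : s < t := pm i hi
    have hinf : k ⊓ s = k ⊓ t := by
      have := congrArg (Submodule.map k.subtype) hae
      rwa [Submodule.map_comap_subtype, Submodule.map_comap_subtype] at this
    have : t ≤ s := by
      intro y hy
      have hfy : f y ∈ Submodule.map f s := by
        rw [show Submodule.map f s = b i from rfl, hbe]
        exact Submodule.mem_map_of_mem hy
      obtain ⟨z, hz, hfz⟩ := hfy
      have hyz : y - z ∈ k ⊓ t := by
        constructor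
        · show y - z ∈ LinearMap.ker f
          rw [LinearMap.mem_ker, map_sub, hfz, sub_self]
        · exact Submodule.sub_mem _ hy (hst.le hz)
      rw [← hinf] at hyz
      have : y - z ∈ s := hyz.2
      have := Submodule.add_mem _ hz this
      simpa using this
    exact absurd this hst.not_ge
  have key := nat_chain_bound a b p.length ha hb hd
  have h1 : Order.height (a p.length) ≤ Order.krullDim (Submodule R k) := by
    exact Order.height_le_krullDim _
  have h2 : Order.height (b p.length) ≤ Order.krullDim (Submodule R N) := by
    exact Order.height_le_krullDim _
  calc (p.length : WithBot ℕ∞) = ((p.length : ℕ∞) : WithBot ℕ∞) := by push_cast; rfl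
    _ ≤ ((Order.height (a p.length) + Order.height (b p.length) : ℕ∞) : WithBot ℕ∞) := by
        exact_mod_cast key
    _ = (Order.height (a p.length) : WithBot ℕ∞) + (Order.height (b p.length)) := by
        push_cast; rfl
    _ ≤ moduleLength R k + moduleLength R N := add_le_add h1 h2

/-- Concatenation lower bound: for a surjection, chains in the kernel and the target
give a chain in the source. -/
lemma length_add_le_moduleLength (f : M →ₗ[R] N) (hf : Function.Surjective f)
    (p : LTSeries (Submodule R (LinearMap.ker f))) (q : LTSeries (Submodule R N)) :
    ((p.length + q.length : ℕ) : WithBot ℕ∞) ≤ moduleLength R M := by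
  show _ ≤ Order.krullDim (Submodule R M)
  have hmapinj : Function.Injective (Submodule.map (LinearMap.ker f).subtype) :=
    Submodule.map_injective_of_injective (LinearMap.ker f).injective_subtype
  have hsm1 : StrictMono (Submodule.map (LinearMap.ker f).subtype : Submodule R (LinearMap.ker f) → Submodule R M) :=
    fun s t hst => lt_of_le_of_ne (Submodule.map_mono hst.le) (fun h => hst.ne (hmapinj h))
  have hsm2 : StrictMono (Submodule.comap f : Submodule R N → Submodule R M) := by
    intro s t hst
    refine lt_of_le_of_ne (Submodule.comap_mono hst.le) fun h => hst.ne ?_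
    have := congrArg (Submodule.map f) h
    rwa [Submodule.map_comap_eq_of_surjective hf, Submodule.map_comap_eq_of_surjective hf]
      at this
  let p1 : LTSeries (Submodule R M) := p.map _ hsm1
  let q1 : LTSeries (Submodule R M) := q.map _ hsm2
  have hp1last : p1.last ≤ (LinearMap.ker f) := by
    rw [LTSeries.last_map]
    exact Submodule.map_subtype_le (LinearMap.ker f) _
  have hq1head : (LinearMap.ker f) ≤ q1.head := by
    rw [LTSeries.head_map]
    intro y hy
    simp only [Submodule.mem_comap]
    have : f y = 0 := hy
    rw [this]
    exact Submodule.zero_mem _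
  obtain ⟨c, hc⟩ : ∃ c : LTSeries (Submodule R M), p.length + q.length ≤ c.length := by
    have e1 : p1.length = p.length := rfl
    have e2 : q1.length = q.length := rfl
    by_cases hpl : p1.last = (LinearMap.ker f)
    · by_cases hqh : (LinearMap.ker f) = q1.head
      · exact ⟨p1.smash q1 (hpl.trans hqh), le_of_eq rfl⟩
      · exact ⟨p1.smash (q1.cons (LinearMap.ker f) (lt_of_le_of_ne hq1head hqh))
          (by rw [hpl, RelSeries.head_cons]), by simp only [RelSeries.smash_length, RelSeries.cons_length, RelSeries.snoc_length, e1, e2]; omega⟩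
    · by_cases hqh : (LinearMap.ker f) = q1.head
      · exact ⟨(p1.snoc (LinearMap.ker f) (lt_of_le_of_ne hp1last hpl)).smash q1
          (by rw [RelSeries.last_snoc]; exact hqh), by simp only [RelSeries.smash_length, RelSeries.cons_length, RelSeries.snoc_length, e1, e2]; omega⟩
      · exact ⟨(p1.snoc (LinearMap.ker f) (lt_of_le_of_ne hp1last hpl)).smash
          (q1.cons (LinearMap.ker f) (lt_of_le_of_ne hq1head hqh))
          (by rw [RelSeries.last_snoc, RelSeries.head_cons]),
          by simp only [RelSeries.smash_length, RelSeries.cons_length, RelSeries.snoc_length, e1, e2]; omega⟩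
  have hkd := LTSeries.length_le_krullDim c
  have hcast : ((p.length + q.length : ℕ) : WithBot ℕ∞) ≤ ((c.length : ℕ) : WithBot ℕ∞) := by
    exact_mod_cast hc
  exact hcast.trans hkd

/-- Extract a chain of given length from a Krull-dimension lower bound. -/
lemma exists_ltSeries_of_le {α : Type*} [Preorder α] [Nonempty α] (n : ℕ)
    (h : (n : WithBot ℕ∞) ≤ Order.krullDim α) : ∃ p : LTSeries α, n ≤ p.length := by
  by_contra hcon
  push_neg at hcon
  have : Order.krullDim α ≤ ((n - 1 : ℕ) : WithBot ℕ∞) := by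
    rw [Order.krullDim]
    refine iSup_le fun p => ?_
    have h2 := hcon p
    have h3 : p.length ≤ n - 1 := by omega
    exact_mod_cast h3
  have hn : (n : WithBot ℕ∞) ≤ ((n - 1 : ℕ) : WithBot ℕ∞) := h.trans this
  have hn' : n ≤ n - 1 := by exact_mod_cast hn
  have hpos : 0 < n := by
    rcases Nat.eq_zero_or_pos n with rfl | h'
    · exact absurd (hcon (RelSeries.singleton _ (Classical.arbitrary α))) (by simp)
    · exact h'
  omega

end AuxLength

/-- Let `(R,m)` be a two-dimensional regular local ring and `I, J` nonzero proper ideals with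
`ord(I∩J) = max{ord I, ord J}`. Let `x ∈ m` be a nonzero element satisfying the generic length
conditions and such that `I : x = I : m` and `J : x = J : m` (i.e. `I` and `J` are full with
respect to `x`). Then `(I+J) : x = (I+J) : m`, i.e. `I + J` is full with respect to `x`. -/
theorem full_add_of_full
    {R : Type*} [CommRing R] [IsLocalRing R] [IsNoetherianRing R]
    (hreg : ∃ u v : R, maximalIdeal R = Ideal.span {u, v})
    (hdim : ringKrullDim R = 2)
    (I J : Ideal R) (hI0 : I ≠ ⊥) (hI1 : I ≠ ⊤) (hJ0 : J ≠ ⊥) (hJ1 : J ≠ ⊤)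
    (oI oJ oIJ oIpJ : ℕ)
    (hoI : I ≤ maximalIdeal R ^ oI) (hoI' : ¬ I ≤ maximalIdeal R ^ (oI + 1))
    (hoJ : J ≤ maximalIdeal R ^ oJ) (hoJ' : ¬ J ≤ maximalIdeal R ^ (oJ + 1))
    (hoIJ : I ⊓ J ≤ maximalIdeal R ^ oIJ)
    (hoIJ' : ¬ I ⊓ J ≤ maximalIdeal R ^ (oIJ + 1))
    (hoIpJ : I + J ≤ maximalIdeal R ^ oIpJ)
    (hoIpJ' : ¬ I + J ≤ maximalIdeal R ^ (oIpJ + 1))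
    (hord : oIJ = max oI oJ)
    (x : R) (hx0 : x ≠ 0) (hx : x ∈ maximalIdeal R)
    (hlI : moduleLength R (R ⧸ (I + Ideal.span {x})) = (oI : ℕ∞))
    (hlJ : moduleLength R (R ⧸ (J + Ideal.span {x})) = (oJ : ℕ∞))
    (hlIJ : moduleLength R (R ⧸ (I ⊓ J + Ideal.span {x})) = (oIJ : ℕ∞))
    (hlIpJ : moduleLength R (R ⧸ (I + J + Ideal.span {x})) = (oIpJ : ℕ∞))
    (hIfull : I.colon (Ideal.span {x}) = I.colon (maximalIdeal R))
    (hJfull : J.colon (Ideal.span {x}) = J.colon (maximalIdeal R)) :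
    (I + J).colon (Ideal.span {x}) = (I + J).colon (maximalIdeal R) := by
  classical
  -- order bounds
  have hle1 : oIpJ ≤ oI := by
    by_contra hcon
    exact hoI' (le_trans (le_trans le_sup_left hoIpJ)
      (Ideal.pow_le_pow_right (by omega)))
  have hle2 : oIpJ ≤ oJ := by
    by_contra hcon
    exact hoJ' (le_trans (le_trans le_sup_right hoIpJ)
      (Ideal.pow_le_pow_right (by omega)))
  -- the four ideals
  set P : Ideal R := I + Ideal.span {x} with hP
  set Q : Ideal R := J + Ideal.span {x} with hQ
  set A : Ideal R := I ⊓ J + Ideal.span {x} with hA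
  set S : Ideal R := I + J + Ideal.span {x} with hS
  have hAP : A ≤ P := sup_le_sup_right inf_le_left _
  have hAQ : A ≤ Q := sup_le_sup_right inf_le_right _
  have hPS : P ≤ S := sup_le_sup_right le_sup_left _
  have hQS : Q ≤ S := sup_le_sup_right le_sup_right _
  -- linear maps
  let f1 : R ⧸ A →ₗ[R] R ⧸ P := Submodule.mapQ A P LinearMap.id hAP
  let f2 : R ⧸ A →ₗ[R] R ⧸ Q := Submodule.mapQ A Q LinearMap.id hAQ
  let g1 : R ⧸ P →ₗ[R] R ⧸ S := Submodule.mapQ P S LinearMap.id hPS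
  let g2 : R ⧸ Q →ₗ[R] R ⧸ S := Submodule.mapQ Q S LinearMap.id hQS
  let ψ : R ⧸ A →ₗ[R] (R ⧸ P) × (R ⧸ Q) := LinearMap.prod f1 f2
  let φ : (R ⧸ P) × (R ⧸ Q) →ₗ[R] R ⧸ S :=
    g1.comp (LinearMap.fst R (R ⧸ P) (R ⧸ Q)) - g2.comp (LinearMap.snd R (R ⧸ P) (R ⧸ Q))
  -- lower bound for the length of the product
  obtain ⟨pI, hpI⟩ : ∃ p : LTSeries (Submodule R (R ⧸ P)), oI ≤ p.length := by
    apply exists_ltSeries_of_le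
    exact_mod_cast hlI.symm.le
  obtain ⟨qJ, hqJ⟩ : ∃ p : LTSeries (Submodule R (R ⧸ Q)), oJ ≤ p.length := by
    apply exists_ltSeries_of_le
    exact_mod_cast hlJ.symm.le
  -- transport qJ into the kernel of fst
  let e : (R ⧸ Q) ≃ₗ[R] LinearMap.ker (LinearMap.fst R (R ⧸ P) (R ⧸ Q)) :=
    (LinearEquiv.ofInjective (LinearMap.inr R (R ⧸ P) (R ⧸ Q)) LinearMap.inr_injective).trans
      (LinearEquiv.ofEq _ _ (LinearMap.range_inr R (R ⧸ P) (R ⧸ Q)))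
  let eo : Submodule R (R ⧸ Q) ≃o
      Submodule R (LinearMap.ker (LinearMap.fst R (R ⧸ P) (R ⧸ Q))) :=
    Submodule.orderIsoMapComap e
  let qK : LTSeries (Submodule R (LinearMap.ker (LinearMap.fst R (R ⧸ P) (R ⧸ Q)))) :=
    qJ.map eo eo.strictMono
  have hqK : oJ ≤ qK.length := hqJ
  have hD : ((oJ + oI : ℕ) : WithBot ℕ∞) ≤ moduleLength R ((R ⧸ P) × (R ⧸ Q)) := by
    refine le_trans ?_ (length_add_le_moduleLength (LinearMap.fst R (R ⧸ P) (R ⧸ Q))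
      LinearMap.fst_surjective qK pI)
    have hlen : oJ + oI ≤ qK.length + pI.length := by omega
    exact_mod_cast hlen
  -- lower bound on the kernel of φ
  have hφ := moduleLength_le_ker_add φ
  have hkerφ : ((oIJ : ℕ) : WithBot ℕ∞) ≤ moduleLength R (LinearMap.ker φ) := by
    have h1 : ((oJ + oI : ℕ) : WithBot ℕ∞) ≤
        moduleLength R (LinearMap.ker φ) + ((oIpJ : ℕ∞) : WithBot ℕ∞) := by
      refine le_trans hD (le_trans hφ ?_)
      rw [hlIpJ]
    generalize moduleLength R (LinearMap.ker φ) = c at h1 ⊢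
    induction c using WithBot.recBotCoe with
    | bot =>
      rw [WithBot.bot_add] at h1
      exact absurd h1 (WithBot.not_coe_le_bot _)
    | coe c' =>
      induction c' using ENat.recTopCoe with
      | top => exact_mod_cast le_top
      | coe k =>
        have h2 : ((oJ + oI : ℕ∞) : WithBot ℕ∞) ≤ (((k + oIpJ : ℕ∞)) : WithBot ℕ∞) := by
          exact_mod_cast h1
        have h3 : (oJ + oI : ℕ∞) ≤ (k + oIpJ : ℕ∞) := WithBot.coe_le_coe.mp h2
        have h4 : oJ + oI ≤ k + oIpJ := by exact_mod_cast h3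
        have h5 : oIJ ≤ k := by omega
        exact_mod_cast h5
  -- the crucial containment  P ⊓ Q ≤ A
  have hPQA : P ⊓ Q ≤ A := by
    intro r hr
    by_contra hrA
    -- ψ', the corestriction of ψ to ker φ
    have hψφ : ∀ c : R ⧸ A, ψ c ∈ LinearMap.ker φ := by
      intro c
      obtain ⟨rc, rfl⟩ := Submodule.Quotient.mk_surjective A c
      simp only [LinearMap.mem_ker, ψ, φ, LinearMap.sub_apply, LinearMap.comp_apply,
        LinearMap.prod_apply, Function.prod, LinearMap.fst_apply, LinearMap.snd_apply, f1, f2, g1, g2,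
        Submodule.mapQ_apply, LinearMap.id_apply, sub_self]
    let ψ' : R ⧸ A →ₗ[R] LinearMap.ker φ := LinearMap.codRestrict _ ψ hψφ
    -- ψ' is surjective
    have hψ'surj : Function.Surjective ψ' := by
      rintro ⟨⟨u, v⟩, huv⟩
      obtain ⟨a, rfl⟩ := Submodule.Quotient.mk_surjective P u
      obtain ⟨b, rfl⟩ := Submodule.Quotient.mk_surjective Q v
      have hab : a - b ∈ S := by
        have : φ (Submodule.Quotient.mk a, Submodule.Quotient.mk b) = 0 := huv
        simp only [φ, LinearMap.sub_apply, LinearMap.comp_apply, LinearMap.fst_apply,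
          LinearMap.snd_apply, g1, g2, Submodule.mapQ_apply, LinearMap.id_apply] at this
        rwa [sub_eq_zero, Submodule.Quotient.eq] at this
      rw [hS] at hab
      rw [Submodule.add_eq_sup, Submodule.mem_sup] at hab
      obtain ⟨e', he', t, ht, het⟩ := hab
      rw [Submodule.add_eq_sup, Submodule.mem_sup] at he'
      obtain ⟨i, hi, j, hj, hij⟩ := he'
      refine ⟨Submodule.Quotient.mk (a - i - t), ?_⟩
      apply Subtype.ext
      have h1 : (ψ' (Submodule.Quotient.mk (a - i - t)) : (R ⧸ P) × (R ⧸ Q)) =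
          ψ (Submodule.Quotient.mk (a - i - t)) := rfl
      rw [h1]
      simp only [ψ, LinearMap.prod_apply, Function.prod, f1, f2, Submodule.mapQ_apply,
        LinearMap.id_apply]
      refine Prod.ext ?_ ?_
      · show Submodule.Quotient.mk (a - i - t) = Submodule.Quotient.mk a
        rw [Submodule.Quotient.eq]
        have : a - i - t - a = -(i + t) := by ring
        rw [this]
        refine neg_mem (Submodule.add_mem _ ?_ ?_)
        · exact (le_sup_left : I ≤ P) hi
        · exact (le_sup_right : Ideal.span {x} ≤ P) ht
      · show Submodule.Quotient.mk (a - i - t) = Submodule.Quotient.mk b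
        rw [Submodule.Quotient.eq]
        have : a - i - t - b = j := by
          have h2 : a - b = i + j + t := by rw [← hij] at het; linear_combination het.symm
          linear_combination h2
        rw [this]
        exact (le_sup_left : J ≤ Q) hj
    -- the element mk r is a nonzero element of ker ψ'
    have hrP : r ∈ P := hr.1
    have hrQ : r ∈ Q := hr.2
    have hker : ψ' (Submodule.Quotient.mk r) = 0 := by
      apply Subtype.ext
      have h1 : (ψ' (Submodule.Quotient.mk r) : (R ⧸ P) × (R ⧸ Q)) =
          ψ (Submodule.Quotient.mk r) := rfl
      rw [h1]
      simp only [ψ, LinearMap.prod_apply, Function.prod, f1, f2, Submodule.mapQ_apply,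
        LinearMap.id_apply]
      have e1 : (Submodule.Quotient.mk r : R ⧸ P) = 0 := (Submodule.Quotient.mk_eq_zero P).mpr hrP
      have e2 : (Submodule.Quotient.mk r : R ⧸ Q) = 0 := (Submodule.Quotient.mk_eq_zero Q).mpr hrQ
      rw [e1, e2]
      rfl
    have hk0 : (⟨Submodule.Quotient.mk r, hker⟩ : LinearMap.ker ψ') ≠ 0 := by
      intro h
      apply hrA
      have : (Submodule.Quotient.mk r : R ⧸ A) = 0 := congrArg Subtype.val h
      exact (Submodule.Quotient.mk_eq_zero A).mp this
    have hnt : Nontrivial (LinearMap.ker ψ') := ⟨_, 0, hk0⟩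
    have hbt : (⊥ : Submodule R (LinearMap.ker ψ')) < ⊤ :=
      lt_of_le_of_ne le_top bot_ne_top
    let q0 : LTSeries (Submodule R (LinearMap.ker ψ')) :=
      (RelSeries.singleton _ ⊥).snoc ⊤ hbt
    have hq0 : q0.length = 1 := rfl
    -- chain in ker φ of length oIJ
    obtain ⟨qφ, hqφ⟩ : ∃ p : LTSeries (Submodule R (LinearMap.ker φ)), oIJ ≤ p.length :=
      exists_ltSeries_of_le _ hkerφ
    have hcontra := length_add_le_moduleLength ψ' hψ'surj q0 qφ
    rw [hlIJ] at hcontra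
    have : q0.length + qφ.length ≤ oIJ := by exact_mod_cast hcontra
    omega
  -- final argument
  apply le_antisymm
  · -- (I+J) : x ≤ (I+J) : m
    intro r hr
    have hrx : r * x ∈ I + J := Ideal.mem_colon_span_singleton.mp hr
    rw [Submodule.add_eq_sup, Submodule.mem_sup] at hrx
    obtain ⟨a, ha, b, hb, hab⟩ := hrx
    -- a ∈ P ⊓ Q
    have haP : a ∈ P := (le_sup_left : I ≤ P) ha
    have haQ : a ∈ Q := by
      have : a = -b + r * x := by linear_combination hab
      rw [this]
      refine Submodule.add_mem _ (neg_mem ((le_sup_left : J ≤ Q) hb)) ?_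
      exact (le_sup_right : Ideal.span {x} ≤ Q) (Ideal.mem_span_singleton'.mpr ⟨r, rfl⟩)
    have haA : a ∈ A := hPQA ⟨haP, haQ⟩
    rw [hA, Submodule.add_eq_sup, Submodule.mem_sup] at haA
    obtain ⟨c, hc, z, hz, hcz⟩ := haA
    obtain ⟨s, hs⟩ := Ideal.mem_span_singleton'.mp hz
    -- s * x ∈ I
    have hsx : s * x ∈ I := by
      have : s * x = a - c := by linear_combination hs + hcz
      rw [this]
      exact Submodule.sub_mem _ ha hc.1
    have hsm : s ∈ I.colon (maximalIdeal R) := by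
      rw [← hIfull]
      exact Ideal.mem_colon_span_singleton.mpr hsx
    -- (r - s) * x ∈ J
    have hrsx : (r - s) * x ∈ J := by
      have : (r - s) * x = b + c := by
        linear_combination -hab - hs - hcz
      rw [this]
      exact Submodule.add_mem _ hb hc.2
    have hrsm : r - s ∈ J.colon (maximalIdeal R) := by
      rw [← hJfull]
      exact Ideal.mem_colon_span_singleton.mpr hrsx
    -- conclude
    rw [Submodule.mem_colon] at hsm hrsm ⊢
    intro p hp
    have h1 : s • p ∈ I := hsm p hp
    have h2 : (r - s) • p ∈ J := hrsm p hp
    have : r • p = s • p + (r - s) • p := by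
      simp only [smul_eq_mul]
      ring
    rw [this]
    exact Submodule.add_mem _ ((le_sup_left : I ≤ I + J) h1)
      ((le_sup_right : J ≤ I + J) h2)
  · -- (I+J) : m ≤ (I+J) : x
    intro r hr
    rw [Submodule.mem_colon] at hr
    exact Ideal.mem_colon_span_singleton.mpr (by simpa using hr x hx)
end
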